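/- Let W be a vector space of dimension p over GF(2) and let V = ⋃_{w∈W} V_w be a partition of a vertex set. Define a 2k-uniform hypergraph H where a 2k-set X = {x_1,...,x_{2k}} with x_i ∈ V_{w_i} is an edge iff w_1 + ... + w_{2k} ≠ 0. Then H contains no copy of C^(2k)_r for r = 2^p + 1, i.e., for any r pairwise disjoint k-sets P_1,...,P_r there exist i ≠ j with P_i ∪ P_j not an edge. -/
import Mathlib

/-- let `W` be a `p`-dimensional vector space over `GF(2)` and label the
vertices by elements of `W` (the partition `V = ⋃_{w} V_w`).  The `2k`-uniform hypergraph
whose edges are the `2k`-sets `X` with `ΣX ≠ 0` contains no copy of `C^(2k)_r` for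
`r = 2^p + 1`: among any `r` pairwise disjoint `k`-sets, some two have union with label
sum `0` (hence a non-edge). -/
theorem stmt_16 {V W : Type*} [DecidableEq V] [AddCommGroup W] [Module (ZMod 2) W]
    [Fintype W] (p k : ℕ) (hW : Module.finrank (ZMod 2) W = p)
    (w : V → W) (r : ℕ) (hr : r = 2 ^ p + 1)
    (P : Fin r → Finset V) (hcard : ∀ i, (P i).card = k)
    (hdisj : ∀ i j, i ≠ j → Disjoint (P i) (P j)) :
    ∃ i j, i ≠ j ∧ ∑ x ∈ P i ∪ P j, w x = 0 := by
  have hcardW : Fintype.card W = 2 ^ p := by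
    rw [Module.card_eq_pow_finrank (K := ZMod 2), hW, ZMod.card]
  have hlt : Fintype.card W < Fintype.card (Fin r) := by
    simp [hcardW, hr]
  obtain ⟨i, j, hij, heq⟩ := Fintype.exists_ne_map_eq_of_card_lt
    (fun i : Fin r => ∑ x ∈ P i, w x) hlt
  refine ⟨i, j, hij, ?_⟩
  rw [Finset.sum_union (hdisj i j hij), heq]
  have : (2 : ZMod 2) • (∑ x ∈ P j, w x) = 0 := by
    simp [show (2 : ZMod 2) = 0 from rfl]
  rwa [two_smul] at this
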